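/- For every real number x with 0 < x < 2π, the series ∑_{n=1}^∞ sin(nx)/n converges and its sum equals (π − x)/2. -/

import Mathlib

open Filter Real Topology Finset

/-- For every real `0 < x < 2π`, the series `∑_{n=1}^∞ sin(nx)/n` converges and its sum
equals `(π - x)/2`. -/
theorem fourier_sawtooth (x : ℝ) (hx0 : 0 < x) (hx2 : x < 2 * Real.pi) :
    Tendsto (fun N : ℕ => ∑ n ∈ Finset.range N, Real.sin ((n + 1) * x) / (n + 1))
      atTop (nhds ((Real.pi - x) / 2)) := by
  have hpi := Real.pi_pos
  set z : ℂ := Complex.exp (x * Complex.I) with hz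
  have hznorm : ‖z‖ = 1 := by
    rw [hz, Complex.norm_exp]
    simp
  have hcos : Real.cos x < 1 := by
    rcases lt_or_eq_of_le (Real.cos_le_one x) with h | h
    · exact h
    · exfalso
      have := (Real.cos_eq_one_iff_of_lt_of_lt (by linarith : -(2*Real.pi) < x) hx2).mp h
      linarith
  have hzre : (1 - z).re = 1 - Real.cos x := by
    simp [hz, Complex.exp_ofReal_mul_I_re]
  have hz1 : z ≠ 1 := by
    intro h
    rw [h] at hzre
    simp at hzre
    linarith
  -- bounded partial sums of z^(i+1)
  have hb : ∀ n : ℕ, ‖∑ i ∈ Finset.range n, z ^ (i + 1)‖ ≤ 2 / ‖z - 1‖ := by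
    intro n
    have hz1' : z - 1 ≠ 0 := sub_ne_zero.mpr hz1
    have hpos : 0 < ‖z - 1‖ := norm_pos_iff.mpr hz1'
    have h1 : ∑ i ∈ Finset.range n, z ^ (i + 1) = z * ((z ^ n - 1) / (z - 1)) := by
      rw [← geom_sum_eq hz1 n, Finset.mul_sum]
      exact Finset.sum_congr rfl fun i _ => by ring
    rw [h1, norm_mul, hznorm, one_mul, norm_div]
    have h2 : ‖z ^ n - 1‖ ≤ 2 := by
      calc ‖z ^ n - 1‖ ≤ ‖z ^ n‖ + ‖(1:ℂ)‖ := norm_sub_le _ _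
        _ = 2 := by rw [norm_pow, hznorm]; norm_num
    gcongr
  -- Dirichlet test: partial sums of z^(n+1)/(n+1) converge
  have hcauchy : CauchySeq fun N => ∑ n ∈ Finset.range N, z ^ (n + 1) / ((n : ℂ) + 1) := by
    have hant : Antitone fun n : ℕ => ((n : ℝ) + 1)⁻¹ := by
      intro a b hab
      exact inv_anti₀ (by positivity) (by exact_mod_cast by linarith)
    have h0 : Tendsto (fun n : ℕ => ((n : ℝ) + 1)⁻¹) atTop (𝓝 0) := by
      simpa using tendsto_one_div_add_atTop_nhds_zero_nat (𝕜 := ℝ)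
    have := hant.cauchySeq_series_mul_of_tendsto_zero_of_bounded h0 hb
    convert this using 2 with N
    refine Finset.sum_congr rfl fun n _ => ?_
    rw [Complex.real_smul]
    push_cast
    ring
  obtain ⟨l, hl⟩ := cauchySeq_tendsto_of_complete hcauchy
  -- partial sums of F n = z^n / n converge to l
  have hF : Tendsto (fun N => ∑ n ∈ Finset.range N, z ^ n / (n : ℂ)) atTop (𝓝 l) := by
    rw [← tendsto_add_atTop_iff_nat 1]
    convert hl using 2 with N
    rw [Finset.sum_range_succ']
    simp
  -- Abel's limit theorem
  have habel := Complex.tendsto_tsum_powerSeries_nhdsWithin_lt hF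
  rw [tendsto_map'_iff] at habel
  have habel2 : Tendsto (fun r : ℝ => ∑' n : ℕ, z ^ n / (n : ℂ) * (r : ℂ) ^ n)
      (𝓝[<] (1:ℝ)) (𝓝 l) := habel
  -- the limit is -log(1-z)
  have hslit : (1 - z) ∈ Complex.slitPlane := by
    left
    rw [hzre]; linarith
  have hlog : Tendsto (fun r : ℝ => -Complex.log (1 - (r : ℂ) * z)) (𝓝[<] (1:ℝ))
      (𝓝 (-Complex.log (1 - z))) := by
    have ht : Tendsto (fun w : ℂ => 1 - w * z) (𝓝 (1:ℂ)) (𝓝 (1 - z)) := by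
      have hcont : ContinuousAt (fun w : ℂ => 1 - w * z) 1 := by fun_prop
      simpa using hcont.tendsto
    have hc : Tendsto (fun w : ℂ => -Complex.log (1 - w * z)) (𝓝 (1:ℂ))
        (𝓝 (-Complex.log (1 - z))) :=
      ((continuousAt_clog hslit).tendsto.comp ht).neg
    have h1 : Tendsto (fun r : ℝ => (r : ℂ)) (𝓝[<] (1:ℝ)) (𝓝 (1:ℂ)) :=
      (Complex.continuous_ofReal.tendsto 1).mono_left nhdsWithin_le_nhds
    exact hc.comp h1
  have heq : (fun r : ℝ => ∑' n : ℕ, z ^ n / (n : ℂ) * (r : ℂ) ^ n) =ᶠ[𝓝[<] (1:ℝ)]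
      (fun r : ℝ => -Complex.log (1 - (r : ℂ) * z)) := by
    filter_upwards [Ioo_mem_nhdsLT_of_mem
      (by constructor <;> norm_num : (1:ℝ) ∈ Set.Ioc (-1 : ℝ) 1)] with r hr
    have hrz : ‖(r : ℂ) * z‖ < 1 := by
      rw [norm_mul, hznorm, mul_one, Complex.norm_real]
      exact abs_lt.mpr ⟨hr.1, hr.2⟩
    have hs := Complex.hasSum_taylorSeries_neg_log hrz
    rw [← hs.tsum_eq]
    congr 1
    ext n
    rw [mul_pow]
    ring
  have hleq : l = -Complex.log (1 - z) :=
    tendsto_nhds_unique (habel2.congr' heq) hlog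
  -- compute the argument of 1 - z
  have hsin : 0 < Real.sin (x / 2) :=
    Real.sin_pos_of_pos_of_lt_pi (by linarith) (by linarith)
  have hfact : (1 : ℂ) - z = ((2 * Real.sin (x/2) : ℝ) : ℂ) *
      (↑(Real.cos ((x - Real.pi)/2)) + ↑(Real.sin ((x - Real.pi)/2)) * Complex.I) := by
    have hre : 2 * Real.sin (x/2) * Real.cos ((x - Real.pi)/2) = 1 - Real.cos x := by
      have h1 : (x - Real.pi)/2 = x/2 - Real.pi/2 := by ring
      rw [h1, Real.cos_sub_pi_div_two]
      have h2 : Real.cos x = Real.cos (2 * (x/2)) := by congr 1; ring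
      rw [h2, Real.cos_two_mul']
      have := Real.sin_sq_add_cos_sq (x/2)
      nlinarith
    have him : 2 * Real.sin (x/2) * Real.sin ((x - Real.pi)/2) = -Real.sin x := by
      have h1 : (x - Real.pi)/2 = x/2 - Real.pi/2 := by ring
      rw [h1, Real.sin_sub_pi_div_two]
      have h2 : Real.sin x = Real.sin (2 * (x/2)) := by congr 1; ring
      rw [h2, Real.sin_two_mul]
      ring
    apply Complex.ext
    · simp only [Complex.sub_re, Complex.one_re, Complex.mul_re, Complex.ofReal_re,
        Complex.add_re, Complex.mul_im, Complex.add_im, Complex.ofReal_im, Complex.I_re,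
        Complex.I_im, Complex.mul_I_re, Complex.mul_I_im]
      rw [hz, Complex.exp_ofReal_mul_I_re]
      simp
      nlinarith [hre]
    · simp only [Complex.sub_im, Complex.one_im, Complex.mul_im, Complex.ofReal_re,
        Complex.ofReal_im, Complex.add_im, Complex.add_re, Complex.mul_I_im, Complex.mul_I_re,
        Complex.I_re, Complex.I_im, Complex.mul_re]
      rw [hz, Complex.exp_ofReal_mul_I_im]
      simp
      nlinarith [him]
  have harg : Complex.arg (1 - z) = (x - Real.pi)/2 := by
    rw [hfact, Complex.arg_real_mul _ (by positivity : (0:ℝ) < 2 * Real.sin (x/2)),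
      Complex.ofReal_cos, Complex.ofReal_sin]
    exact Complex.arg_cos_add_sin_mul_I (Set.mem_Ioc.mpr ⟨by linarith, by linarith⟩)
  have hlim : l.im = (Real.pi - x)/2 := by
    rw [hleq, Complex.neg_im, Complex.log_im, harg]
    ring
  -- conclude by taking imaginary parts
  have him := (Complex.continuous_im.tendsto l).comp hl
  rw [hlim] at him
  convert him using 2 with N
  simp only [Function.comp_apply, Complex.im_sum]
  refine Finset.sum_congr rfl fun n _ => ?_
  have hzpow : z ^ (n + 1) = Complex.exp ((((n:ℝ) + 1) * x : ℝ) * Complex.I) := by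
    rw [hz, ← Complex.exp_nat_mul]
    push_cast
    ring_nf
  have : (z ^ (n + 1) / ((n : ℂ) + 1)) = z ^ (n + 1) / (((n : ℝ) + 1 : ℝ) : ℂ) := by
    push_cast; ring
  rw [this, Complex.div_ofReal_im, hzpow, Complex.exp_ofReal_mul_I_im]
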